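/- Deformation determinant formula (multiplicative Poincaré–Hopf): let G be a finite abstract simplicial complex, let x ∈ G be a facet (maximal with respect to inclusion), let H = G \ {x}, and let L be the connection matrix of H. For a real parameter t, let K(t) be the matrix indexed by G with K(t)(y,z) = L(y,z) for y, z ∈ H, K(t)(x,x) = 1, and K(t)(y,x) = K(t)(x,y) = t if y ∈ H intersects x and 0 otherwise. Then det(K(t)) = (1 - t²·χ(A))·det(L), where A = { y ∈ G : ∅ ≠ y ⊊ x } is the boundary complex of x. In particular, det(K(1)) = ω(x)·det(L). -/

import Mathlib

open Finset BigOperators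

variable {α : Type*} [DecidableEq α]

/-- A finite abstract simplicial complex: a finite collection of nonempty finite
sets closed under taking nonempty subsets. -/
def IsComplex (G : Finset (Finset α)) : Prop :=
  (∀ x ∈ G, x.Nonempty) ∧ ∀ x ∈ G, ∀ y : Finset α, y.Nonempty → y ⊆ x → y ∈ G

/-- ω(x) = (-1)^(|x|-1). -/
def omegaS (x : Finset α) : ℤ := (-1) ^ (x.card - 1)

/-- Euler characteristic of any finite collection of finite sets. -/
def chi (G : Finset (Finset α)) : ℤ := ∑ x ∈ G, omegaS x

/-- The connection matrix over ℝ: L(y,z)=1 if y and z intersect, 0 otherwise. -/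
def connL (G : Finset (Finset α)) : Matrix G G ℝ :=
  fun y z => if (y.1 ∩ z.1).Nonempty then 1 else 0

/-- The deformed connection matrix K(t) of G = H ∪ {x}: it agrees with the
connection matrix of H = G \ {x} away from x, has K(t)(x,x) = 1, and the row
and column of x carry the connection entries multiplied by t. -/
def deformK (G : Finset (Finset α)) (x : Finset α) (t : ℝ) : Matrix G G ℝ :=
  fun y z =>
    if y.1 = x then
      (if z.1 = x then 1 else if (y.1 ∩ z.1).Nonempty then t else 0)
    else if z.1 = x then
      (if (y.1 ∩ z.1).Nonempty then t else 0)
    else if (y.1 ∩ z.1).Nonempty then 1 else 0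

lemma sum_omega_powersetX (S : Finset α) (hS : S.Nonempty) :
    ∑ a ∈ S.powerset.filter (fun a => a.Nonempty), ((-1:ℝ)^(a.card - 1)) = 1 := by
  have h0 : (∑ m ∈ S.powerset, (-1 : ℤ) ^ m.card) = 0 :=
    Finset.sum_powerset_neg_one_pow_card_of_nonempty hS
  have h0' : (∑ m ∈ S.powerset, (-1 : ℝ) ^ m.card) = 0 := by
    have := congrArg (fun n : ℤ => (n : ℝ)) h0
    push_cast at this
    exact this
  have hsplit := Finset.sum_filter_add_sum_filter_not S.powerset (fun a => a.Nonempty)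
      (fun a => (-1:ℝ)^a.card)
  have hnot : S.powerset.filter (fun a => ¬ a.Nonempty) = {∅} := by
    ext a
    simp only [Finset.mem_filter, Finset.mem_powerset, Finset.not_nonempty_iff_eq_empty,
      Finset.mem_singleton]
    constructor
    · rintro ⟨-, h⟩; exact h
    · rintro rfl; exact ⟨Finset.empty_subset _, rfl⟩
  rw [hnot, h0'] at hsplit
  simp at hsplit
  have key : ∀ a ∈ S.powerset.filter (fun a => a.Nonempty),
      ((-1:ℝ)^(a.card - 1)) = -((-1:ℝ)^a.card) := by
    intro a ha
    simp only [Finset.mem_filter] at ha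
    obtain ⟨k, hk⟩ : ∃ k, a.card = k + 1 :=
      ⟨a.card - 1, (Nat.succ_pred_eq_of_pos (Finset.card_pos.2 ha.2)).symm⟩
    rw [hk]
    simp [pow_succ]
  rw [Finset.sum_congr rfl key, Finset.sum_neg_distrib]
  linarith

lemma key_sumX (x z : Finset α) (hxz : ¬ x ⊆ z) :
    ∑ a ∈ x.powerset.filter (fun y => y.Nonempty ∧ y ≠ x),
      (-1:ℝ)^(a.card - 1) * (if (a ∩ z).Nonempty then 1 else 0)
    = -((-1:ℝ)^(x.card - 1)) * (if (x ∩ z).Nonempty then 1 else 0) := by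
  by_cases hw : (x ∩ z).Nonempty
  · have hxne : x.Nonempty := hw.mono Finset.inter_subset_left
    have h1 : x.powerset.filter (fun y => y.Nonempty ∧ y ≠ x)
        = (x.powerset.filter (fun y => y.Nonempty)).erase x := by
      ext a
      simp only [Finset.mem_filter, Finset.mem_erase, Finset.mem_powerset]
      tauto
    have hxmem : x ∈ x.powerset.filter (fun y => y.Nonempty) := by
      simp [hxne]
    rw [h1, Finset.sum_erase_eq_sub hxmem]
    have h2 : ∑ a ∈ x.powerset.filter (fun y => y.Nonempty),
        (-1:ℝ)^(a.card - 1) * (if (a ∩ z).Nonempty then 1 else 0) = 0 := by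
      have hsw : ∀ a ∈ x.powerset.filter (fun y => y.Nonempty),
          (-1:ℝ)^(a.card - 1) * (if (a ∩ z).Nonempty then 1 else 0)
          = if (a ∩ z).Nonempty then (-1:ℝ)^(a.card - 1) else 0 := by
        intro a _; split <;> simp
      rw [Finset.sum_congr rfl hsw, ← Finset.sum_filter]
      have hsplit := Finset.sum_filter_add_sum_filter_not
        (x.powerset.filter (fun y => y.Nonempty)) (fun a => (a ∩ z).Nonempty)
        (fun a => (-1:ℝ)^(a.card - 1))
      have hne2 : (x \ z).Nonempty := by
        obtain ⟨m, hm, hmz⟩ := Finset.not_subset.1 hxz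
        exact ⟨m, Finset.mem_sdiff.2 ⟨hm, hmz⟩⟩
      have hcompl : (x.powerset.filter (fun y => y.Nonempty)).filter
          (fun a => ¬ (a ∩ z).Nonempty) = (x \ z).powerset.filter (fun a => a.Nonempty) := by
        ext a
        simp only [Finset.mem_filter, Finset.mem_powerset, Finset.not_nonempty_iff_eq_empty,
          Finset.subset_sdiff, ← Finset.disjoint_iff_inter_eq_empty]
        tauto
      rw [Finset.filter_filter, Finset.filter_filter] at hsplit
      rw [Finset.filter_filter] at hcompl ⊢
      rw [hcompl] at hsplit
      rw [sum_omega_powersetX _ hne2, sum_omega_powersetX _ hxne] at hsplit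
      linarith
    rw [h2, if_pos hw]
    ring
  · rw [if_neg hw]
    rw [Finset.sum_eq_zero, mul_zero]
    intro a ha
    simp only [Finset.mem_filter, Finset.mem_powerset] at ha
    have : ¬ (a ∩ z).Nonempty := by
      intro h
      exact hw (h.mono (Finset.inter_subset_inter ha.1 (Finset.Subset.refl z)))
    rw [if_neg this, mul_zero]

def sumEquivX (G : Finset (Finset α)) (x : Finset α) (hx : x ∈ G) :
    {y // y ∈ G} ≃ (Unit ⊕ {y // y ∈ G.erase x}) where
  toFun y := if h : y.1 = x then Sum.inl () else
    Sum.inr ⟨y.1, Finset.mem_erase.2 ⟨h, y.2⟩⟩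
  invFun s := Sum.elim (fun _ => ⟨x, hx⟩) (fun z => ⟨z.1, Finset.mem_of_mem_erase z.2⟩) s
  left_inv y := by
    by_cases h : y.1 = x
    · simp only [h, dif_pos]
      exact Subtype.ext h.symm
    · simp [h]
  right_inv s := by
    rcases s with _ | z
    · simp
    · have hz : z.1 ≠ x := (Finset.mem_erase.1 z.2).1
      simp [hz]


/-- Deformation determinant formula (multiplicative Poincaré–Hopf): for a facet
x of G with boundary complex A = { y : ∅ ≠ y ⊊ x } and H = G \ {x},
det(K(t)) = (1 - t²·χ(A))·det(L(H)); in particular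
det(K(1)) = ω(x)·det(L(H)). -/
theorem deformation_determinant (G : Finset (Finset α)) (hG : IsComplex G)
    (x : Finset α) (hx : x ∈ G) (hfacet : ∀ z ∈ G, x ⊆ z → z = x) :
    (∀ t : ℝ, (deformK G x t).det =
      (1 - t ^ 2 * (chi (x.powerset.filter (fun y => y.Nonempty ∧ y ≠ x)) : ℝ))
        * (connL (G.erase x)).det) ∧
    (deformK G x 1).det = (omegaS x : ℝ) * (connL (G.erase x)).det := by
  obtain ⟨hne, hclosed⟩ := hG
  have hxne : x.Nonempty := hne x hx
  set ωx : ℝ := (-1:ℝ)^(x.card - 1) with hωx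
  set AG := x.powerset.filter (fun y => y.Nonempty ∧ y ≠ x) with hAG
  have hchiR : ((chi AG : ℤ) : ℝ) = ∑ a ∈ AG, (-1:ℝ)^(a.card - 1) := by
    rw [chi]
    push_cast [omegaS]
    rfl
  have hchi1 : ((chi AG : ℤ) : ℝ) = 1 - ωx := by
    rw [hchiR]
    have h1 : AG = (x.powerset.filter (fun y => y.Nonempty)).erase x := by
      ext a
      simp only [hAG, Finset.mem_filter, Finset.mem_erase, Finset.mem_powerset]
      tauto
    have hxmem : x ∈ x.powerset.filter (fun y => y.Nonempty) := by simp [hxne]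
    rw [h1, Finset.sum_erase_eq_sub hxmem, sum_omega_powersetX _ hxne]
  have hω2 : ωx * ωx = 1 := by
    rw [hωx, ← pow_add]
    exact Even.neg_one_pow ⟨_, rfl⟩
  have main : ∀ t : ℝ, (deformK G x t).det =
      (1 - t ^ 2 * ((chi AG : ℤ) : ℝ)) * (connL (G.erase x)).det := by
    intro t
    set χR : ℝ := ((chi AG : ℤ) : ℝ) with hχR
    set c : ℝ := 1 + ωx * t^2 * χR with hc
    set K := deformK G x t with hK
    set xg : {y // y ∈ G} := ⟨x, hx⟩ with hxg
    set w : {y // y ∈ G} → ℝ :=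
      fun j => if j.1 ⊆ x ∧ j.1 ≠ x then ωx * (-1:ℝ)^(j.1.card - 1) * t else 0 with hwdef
    set d : {y // y ∈ G} → ℝ := fun j => (if j = xg then 1 else 0) + w j with hddef
    have hwxg : w xg = 0 := by simp [hwdef, hxg]
    have hdxg : d xg = 1 := by simp [hddef, hwxg]
    have hfiltG : G.filter (fun p => p ⊆ x ∧ p ≠ x) = AG := by
      ext p
      simp only [Finset.mem_filter, Finset.mem_powerset, hAG]
      constructor
      · rintro ⟨hpG, h1, h2⟩; exact ⟨h1, hne p hpG, h2⟩
      · rintro ⟨h1, h2, h3⟩; exact ⟨hclosed x hx p h2 h1, h1, h3⟩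
    have hsumA : ∀ g : Finset α → ℝ,
        (∑ j : {y // y ∈ G}, (if j.1 ⊆ x ∧ j.1 ≠ x then g j.1 else 0)) = ∑ p ∈ AG, g p := by
      intro g
      rw [Finset.sum_coe_sort G (fun p => if p ⊆ x ∧ p ≠ x then g p else 0),
        ← Finset.sum_filter, hfiltG]
    -- row sums against w
    have hwKx : ∑ j : {y // y ∈ G}, w j * K j xg = ωx * t^2 * χR := by
      have hpt : ∀ j : {y // y ∈ G}, w j * K j xg
          = (if j.1 ⊆ x ∧ j.1 ≠ x then (ωx * t * t) * ((-1:ℝ)^(j.1.card - 1)) else 0) := by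
        intro j
        by_cases h : j.1 ⊆ x ∧ j.1 ≠ x
        · have hjne : (j.1 ∩ x).Nonempty := by
            rw [Finset.inter_eq_left.2 h.1]; exact hne j.1 j.2
          rw [if_pos h]
          show (if j.1 ⊆ x ∧ j.1 ≠ x then ωx * (-1:ℝ)^(j.1.card - 1) * t else 0)
              * deformK G x t j xg = _
          rw [if_pos h]
          simp only [deformK, hxg, if_neg h.2, if_pos rfl, if_pos hjne]
          simp only [if_true]
          ring
        · rw [if_neg h]
          show (if j.1 ⊆ x ∧ j.1 ≠ x then ωx * (-1:ℝ)^(j.1.card - 1) * t else 0) * _ = 0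
          rw [if_neg h, zero_mul]
      rw [Finset.sum_congr rfl (fun j _ => hpt j),
        hsumA (fun p => ωx * t * t * (-1:ℝ)^(p.card - 1)), ← Finset.mul_sum, hchiR]
      ring
    have hwK : ∀ z : {y // y ∈ G}, z ≠ xg →
        ∑ j : {y // y ∈ G}, w j * K j z = -(if (x ∩ z.1).Nonempty then t else 0) := by
      intro z hz
      have hz1 : z.1 ≠ x := fun h => hz (Subtype.ext h)
      have hxsubz : ¬ x ⊆ z.1 := fun h => hz1 (hfacet z.1 z.2 h)
      have hpt : ∀ j : {y // y ∈ G}, w j * K j z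
          = (if j.1 ⊆ x ∧ j.1 ≠ x then (ωx * t) *
              ((-1:ℝ)^(j.1.card - 1) * (if (j.1 ∩ z.1).Nonempty then 1 else 0)) else 0) := by
        intro j
        by_cases h : j.1 ⊆ x ∧ j.1 ≠ x
        · rw [if_pos h]
          show (if j.1 ⊆ x ∧ j.1 ≠ x then ωx * (-1:ℝ)^(j.1.card - 1) * t else 0)
              * deformK G x t j z = _
          rw [if_pos h]
          simp only [deformK, if_neg h.2, if_neg hz1]
          split <;> ring
        · rw [if_neg h]
          show (if j.1 ⊆ x ∧ j.1 ≠ x then ωx * (-1:ℝ)^(j.1.card - 1) * t else 0) * _ = 0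
          rw [if_neg h, zero_mul]
      rw [Finset.sum_congr rfl (fun j _ => hpt j),
        hsumA (fun p => (ωx * t) * ((-1:ℝ)^(p.card - 1) * (if (p ∩ z.1).Nonempty then 1 else 0))),
        ← Finset.mul_sum, key_sumX x z.1 hxsubz]
      by_cases hc2 : (x ∩ z.1).Nonempty
      · rw [if_pos hc2, if_pos hc2]
        linear_combination (-t) * hω2
      · rw [if_neg hc2, if_neg hc2]
        ring
    have hKw : ∀ k : {y // y ∈ G}, k ≠ xg →
        ∑ i : {y // y ∈ G}, w i * K k i = -(if (x ∩ k.1).Nonempty then t else 0) := by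
      intro k hk
      have hk1 : k.1 ≠ x := fun h => hk (Subtype.ext h)
      have hxsubk : ¬ x ⊆ k.1 := fun h => hk1 (hfacet k.1 k.2 h)
      have hpt : ∀ i : {y // y ∈ G}, w i * K k i
          = (if i.1 ⊆ x ∧ i.1 ≠ x then (ωx * t) *
              ((-1:ℝ)^(i.1.card - 1) * (if (i.1 ∩ k.1).Nonempty then 1 else 0)) else 0) := by
        intro i
        by_cases h : i.1 ⊆ x ∧ i.1 ≠ x
        · rw [if_pos h]
          show (if i.1 ⊆ x ∧ i.1 ≠ x then ωx * (-1:ℝ)^(i.1.card - 1) * t else 0)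
              * deformK G x t k i = _
          rw [if_pos h]
          simp only [deformK, if_neg h.2, if_neg hk1]
          rw [Finset.inter_comm k.1 i.1]
          split <;> ring
        · rw [if_neg h]
          show (if i.1 ⊆ x ∧ i.1 ≠ x then ωx * (-1:ℝ)^(i.1.card - 1) * t else 0) * _ = 0
          rw [if_neg h, zero_mul]
      rw [Finset.sum_congr rfl (fun i _ => hpt i),
        hsumA (fun p => (ωx * t) * ((-1:ℝ)^(p.card - 1) * (if (p ∩ k.1).Nonempty then 1 else 0))),
        ← Finset.mul_sum, key_sumX x k.1 hxsubk]
      by_cases hc2 : (x ∩ k.1).Nonempty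
      · rw [if_pos hc2, if_pos hc2]
        linear_combination (-t) * hω2
      · rw [if_neg hc2, if_neg hc2]
        ring
    have hrow : ∀ z : {y // y ∈ G},
        (∑ j : {y // y ∈ G}, d j * K j z) = if z = xg then c else 0 := by
      intro z
      have hsplit : ∑ j : {y // y ∈ G}, d j * K j z
          = (∑ j : {y // y ∈ G}, (if j = xg then K j z else 0))
            + ∑ j : {y // y ∈ G}, w j * K j z := by
        rw [← Finset.sum_add_distrib]
        refine Finset.sum_congr rfl fun j _ => ?_
        simp only [hddef]
        by_cases h : j = xg
        · rw [if_pos h, if_pos h]; ring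
        · rw [if_neg h, if_neg h]; ring
      rw [hsplit, Finset.sum_ite_eq' Finset.univ xg (fun j => K j z), if_pos (Finset.mem_univ _)]
      by_cases hz : z = xg
      · subst hz
        rw [if_pos rfl, hwKx]
        have hKxx : K xg xg = 1 := by
          show deformK G x t ⟨x, hx⟩ ⟨x, hx⟩ = 1
          simp [deformK]
        rw [hKxx, hc]
      · rw [if_neg hz, hwK z hz]
        have hKxz : K xg z = if (x ∩ z.1).Nonempty then t else 0 := by
          have hz1 : z.1 ≠ x := fun h => hz (Subtype.ext h)
          show deformK G x t ⟨x, hx⟩ z = _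
          simp [deformK, hz1]
        rw [hKxz]
        ring
    set r : {y // y ∈ G} → ℝ := fun z2 => if z2 = xg then c else 0 with hr
    set M1 := K.updateRow xg (∑ j, d j • K j) with hM1
    have hdet1 : M1.det = K.det := by
      rw [hM1, Matrix.det_updateRow_sum, hdxg, one_smul]
    have hM1row : ∀ z2, M1 xg z2 = r z2 := by
      intro z2
      rw [hM1, Matrix.updateRow_self]
      rw [Finset.sum_apply]
      simp only [Pi.smul_apply, smul_eq_mul]
      exact hrow z2
    have hM1off : ∀ y z2, y ≠ xg → M1 y z2 = K y z2 := by
      intro y z2 hy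
      rw [hM1, Matrix.updateRow_ne hy]
    set M2 := M1.updateCol xg (fun k => ∑ i, d i • M1 k i) with hM2
    have hdet2 : M2.det = K.det := by
      rw [hM2, Matrix.det_updateCol_sum, hdxg, one_smul, hdet1]
    have hcolx : M2 xg xg = c := by
      rw [hM2, Matrix.updateCol_self]
      have : ∀ i : {y // y ∈ G}, d i • M1 xg i = if i = xg then c else 0 := by
        intro i
        rw [hM1row i, smul_eq_mul]
        simp only [hr]
        by_cases h : i = xg
        · simp only [if_pos h, h, hdxg, one_mul]
        · simp only [if_neg h, mul_zero]
      rw [Finset.sum_congr rfl (fun i _ => this i),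
        Finset.sum_ite_eq' Finset.univ xg (fun _ => c), if_pos (Finset.mem_univ _)]
    have hcoly : ∀ k, k ≠ xg → M2 k xg = 0 := by
      intro k hk
      rw [hM2, Matrix.updateCol_self]
      have hstep : ∀ i : {y // y ∈ G}, d i • M1 k i = d i * K k i := by
        intro i
        rw [smul_eq_mul, hM1off k i hk]
      rw [Finset.sum_congr rfl (fun i _ => hstep i)]
      have hsplit : ∑ i : {y // y ∈ G}, d i * K k i
          = (∑ i : {y // y ∈ G}, (if i = xg then K k i else 0))
            + ∑ i : {y // y ∈ G}, w i * K k i := by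
        rw [← Finset.sum_add_distrib]
        refine Finset.sum_congr rfl fun i _ => ?_
        simp only [hddef]
        by_cases h : i = xg
        · rw [if_pos h, if_pos h]; ring
        · rw [if_neg h, if_neg h]; ring
      rw [hsplit, Finset.sum_ite_eq' Finset.univ xg (fun i => K k i),
        if_pos (Finset.mem_univ _), hKw k hk]
      have hk1 : k.1 ≠ x := fun h => hk (Subtype.ext h)
      have hKkx : K k xg = if (x ∩ k.1).Nonempty then t else 0 := by
        show deformK G x t k ⟨x, hx⟩ = _
        simp [deformK, hk1, Finset.inter_comm]
      rw [hKkx]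
      ring
    have hM2off : ∀ y z2, z2 ≠ xg → M2 y z2 = M1 y z2 := by
      intro y z2 hz2
      rw [hM2, Matrix.updateCol_ne hz2]
    -- block structure
    set e := sumEquivX G x hx with he
    have hesym_inl : e.symm (Sum.inl ()) = xg := rfl
    have hesym_inr : ∀ z : {y // y ∈ G.erase x},
        e.symm (Sum.inr z) = ⟨z.1, Finset.mem_of_mem_erase z.2⟩ := fun z => rfl
    have hblock : M2.submatrix e.symm e.symm
        = Matrix.fromBlocks (Matrix.of fun _ _ : Unit => c) 0 0 (connL (G.erase x)) := by
      funext i j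
      rcases i with _ | y <;> rcases j with _ | z
      · simpa [Matrix.submatrix_apply, hesym_inl] using hcolx
      · have hz1 : (⟨z.1, Finset.mem_of_mem_erase z.2⟩ : {y // y ∈ G}) ≠ xg := by
          intro h
          exact (Finset.mem_erase.1 z.2).1 (congrArg Subtype.val h)
        simp only [Matrix.submatrix_apply, hesym_inl, hesym_inr, Matrix.fromBlocks_apply₁₂]
        rw [hM2off _ _ hz1, hM1row]
        simp only [hr]
        rw [if_neg hz1]
        rfl
      · have hy1 : (⟨y.1, Finset.mem_of_mem_erase y.2⟩ : {y // y ∈ G}) ≠ xg := by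
          intro h
          exact (Finset.mem_erase.1 y.2).1 (congrArg Subtype.val h)
        simp only [Matrix.submatrix_apply, hesym_inl, hesym_inr, Matrix.fromBlocks_apply₂₁]
        rw [hcoly _ hy1]
        rfl
      · have hy1 : (⟨y.1, Finset.mem_of_mem_erase y.2⟩ : {y // y ∈ G}) ≠ xg := by
          intro h
          exact (Finset.mem_erase.1 y.2).1 (congrArg Subtype.val h)
        have hz1 : (⟨z.1, Finset.mem_of_mem_erase z.2⟩ : {y // y ∈ G}) ≠ xg := by
          intro h
          exact (Finset.mem_erase.1 z.2).1 (congrArg Subtype.val h)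
        simp only [Matrix.submatrix_apply, hesym_inr, Matrix.fromBlocks_apply₂₂]
        rw [hM2off _ _ hz1, hM1off _ _ hy1]
        have hyx : y.1 ≠ x := (Finset.mem_erase.1 y.2).1
        have hzx : z.1 ≠ x := (Finset.mem_erase.1 z.2).1
        show deformK G x t _ _ = connL (G.erase x) y z
        simp [deformK, connL, hyx, hzx]
    have hdetblock : K.det = c * (connL (G.erase x)).det := by
      rw [← hdet2, ← Matrix.det_submatrix_equiv_self e.symm M2, hblock,
        Matrix.det_fromBlocks_zero₂₁, Matrix.det_unique]
      rfl
    rw [hK] at hdetblock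
    rw [hdetblock, hc, hchi1]
    have : (1:ℝ) + ωx * t ^ 2 * (1 - ωx) = 1 - t ^ 2 * (1 - ωx) := by
      linear_combination (-(t^2)) * hω2
    rw [this]
  constructor
  · intro t
    rw [main t]
  · rw [main 1]
    have homega : (omegaS x : ℝ) = ωx := by
      rw [omegaS, hωx]; push_cast; ring
    rw [hchi1, homega]
    ring
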